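/- Let (B₀,B₁) be a Banach couple and let f ∈ 𝔽_𝔸(B₀,B₁). For each n ∈ ℤ, the value of the integral (1/2π)∫₀^{2π} e^{−n(α+it)} f(e^{α+it}) dt (an element of B₀+B₁) is the same for every α ∈ [0,1]; moreover this common value f̂(n) belongs to B₀ ∩ B₁. -/

import Mathlib

open MeasureTheory Complex Filter Set
noncomputable section

/-- The closed annulus `𝔸 = {z : 1 ≤ |z| ≤ e}`. -/
def Ann : Set ℂ := {z | 1 ≤ ‖z‖ ∧ ‖z‖ ≤ Real.exp 1}

/-- The interior of the annulus, `{z : 1 < |z| < e}`. -/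
def AnnInt : Set ℂ := {z | 1 < ‖z‖ ∧ ‖z‖ < Real.exp 1}

section Couple

variable {B₀ B₁ S : Type*}
  [NormedAddCommGroup B₀] [NormedSpace ℂ B₀]
  [NormedAddCommGroup B₁] [NormedSpace ℂ B₁]
  [NormedAddCommGroup S] [NormedSpace ℂ S]

/-- A Banach couple `(B₀,B₁)`, presented through its sum `S = B₀ + B₁`: the Banach spaces
`B₀`, `B₁` are continuously and injectively embedded (via `j₀`, `j₁`) in the Banach space
`S`, every element of `S` is a sum `j₀ b₀ + j₁ b₁`, and the norm of `S` is the usual norm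
`‖s‖ = inf{‖b₀‖ + ‖b₁‖ : s = j₀ b₀ + j₁ b₁}` of the sum of a Banach couple.  (The common
ambient Hausdorff topological vector space may be taken to be `S` itself.) -/
structure IsBanachCouple (j₀ : B₀ →L[ℂ] S) (j₁ : B₁ →L[ℂ] S) : Prop where
  inj₀ : Function.Injective j₀
  inj₁ : Function.Injective j₁
  sum : ∀ s : S, ∃ b₀ b₁, s = j₀ b₀ + j₁ b₁
  norm_eq : ∀ s : S,
    ‖s‖ = sInf {c : ℝ | ∃ b₀ b₁, s = j₀ b₀ + j₁ b₁ ∧ c = ‖b₀‖ + ‖b₁‖}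

/-- `f ∈ 𝔽_𝔸(B₀,B₁)` : `f : 𝔸 → B₀+B₁` is continuous on `𝔸`, analytic in the interior of
`𝔸`, and its restriction to the circle `e^j𝕋` is a continuous map into `B_j`, `j = 0,1`. -/
def MemFA (j₀ : B₀ →L[ℂ] S) (j₁ : B₁ →L[ℂ] S) (f : ℂ → S) : Prop :=
  ContinuousOn f Ann ∧ DifferentiableOn ℂ f AnnInt ∧
  (∃ g₀ : ℝ → B₀, Continuous g₀ ∧
    ∀ t : ℝ, f (Complex.exp ((t : ℂ) * Complex.I)) = j₀ (g₀ t)) ∧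
  (∃ g₁ : ℝ → B₁, Continuous g₁ ∧
    ∀ t : ℝ, f (Complex.exp (1 + (t : ℂ) * Complex.I)) = j₁ (g₁ t))

/-- The `n`-th Laurent coefficient of `f`, computed on the circle of radius `e^α`:
`(1/2π) ∫₀^{2π} e^{-n(α+it)} f(e^{α+it}) dt`. -/
noncomputable def fhat (f : ℂ → S) (n : ℤ) (α : ℝ) : S :=
  (1 / (2 * Real.pi) : ℂ) •
    ∫ t in (0:ℝ)..(2 * Real.pi),
      Complex.exp (-(n : ℂ) * ((α : ℂ) + (t : ℂ) * Complex.I)) •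
        f (Complex.exp ((α : ℂ) + (t : ℂ) * Complex.I))

end Couple

lemma isOpen_AnnInt : IsOpen AnnInt := by
  have h : AnnInt = (fun z : ℂ => ‖z‖) ⁻¹' (Set.Ioo 1 (Real.exp 1)) := rfl
  rw [h]; exact isOpen_Ioo.preimage continuous_norm

lemma fhat_eq {S : Type*} [NormedAddCommGroup S] [NormedSpace ℂ S]
    (f : ℂ → S) (n : ℤ) (α : ℝ) :
    fhat f n α = (1 / (2 * Real.pi) : ℂ) •
      ((-Complex.I) • ∮ z in C(0, Real.exp α), z ^ (-(n+1) : ℤ) • f z) := by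
  rw [circleIntegral, ← intervalIntegral.integral_smul]
  unfold fhat
  congr 1
  apply intervalIntegral.integral_congr
  intro t _
  set w : ℂ := (α : ℂ) + (t : ℂ) * Complex.I with hw
  have hz : circleMap 0 (Real.exp α) t = Complex.exp w := by
    simp [circleMap, hw, Complex.exp_add, Complex.ofReal_exp]
  have hne : Complex.exp w ≠ 0 := Complex.exp_ne_zero _
  simp only [deriv_circleMap, hz, smul_smul]
  congr 1
  have h1 : Complex.exp (-(n:ℂ) * w) = Complex.exp w ^ (-n : ℤ) := by
    rw [show (-(n:ℂ)) = ((-n : ℤ) : ℂ) by push_cast; ring]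
    exact Complex.exp_int_mul w (-n)
  have h2 : Complex.exp w ^ (-n : ℤ) = Complex.exp w ^ (-(n+1) : ℤ) * Complex.exp w := by
    rw [← zpow_add_one₀ hne]; norm_num
  rw [h1, h2]
  linear_combination (Complex.exp w ^ (-(n+1):ℤ) * Complex.exp w) * Complex.I_mul_I

lemma circle_const {S : Type*} [NormedAddCommGroup S] [NormedSpace ℂ S] [CompleteSpace S]
    (f : ℂ → S) (hcont : ContinuousOn f Ann) (hdiff : DifferentiableOn ℂ f AnnInt)
    (n : ℤ) {α : ℝ} (hα : α ∈ Set.Icc (0:ℝ) 1) :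
    (∮ z in C(0, Real.exp α), z ^ (-(n+1) : ℤ) • f z)
      = ∮ z in C(0, (1:ℝ)), z ^ (-(n+1) : ℤ) • f z := by
  have hle : (1:ℝ) ≤ Real.exp α := by
    simpa using Real.exp_le_exp.2 hα.1 |>.trans_eq' Real.exp_zero
  have hsub : Metric.closedBall (0:ℂ) (Real.exp α) \ Metric.ball 0 1 ⊆ Ann := by
    intro z hz
    simp only [Set.mem_diff, Metric.mem_closedBall, Metric.mem_ball, Complex.dist_eq,
      sub_zero, not_lt] at hz
    exact ⟨hz.2, hz.1.trans (Real.exp_le_exp.2 hα.2)⟩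
  apply circleIntegral_eq_of_differentiable_on_annulus_off_countable
    (s := (∅ : Set ℂ)) one_pos hle Set.countable_empty
  · refine ContinuousOn.smul ?_ (hcont.mono hsub)
    refine ContinuousOn.zpow₀ continuousOn_id _ fun z hz => Or.inl ?_
    intro h
    have h1 := (hsub hz).1
    rw [show id z = z from rfl] at h
    rw [h, norm_zero] at h1; linarith
  · intro z hz
    simp only [Metric.mem_ball, Metric.mem_closedBall, Set.mem_diff, Complex.dist_eq,
      sub_zero, not_le, Set.mem_empty_iff_false] at hz
    have h1 : 1 < ‖z‖ := hz.1.2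
    have h2 : ‖z‖ < Real.exp 1 := hz.1.1.trans_le (Real.exp_le_exp.2 hα.2)
    have hzne : z ≠ 0 := fun h => by rw [h, norm_zero] at h1; linarith
    exact (differentiableAt_zpow.2 (Or.inl hzne)).smul
      (hdiff.differentiableAt (isOpen_AnnInt.mem_nhds ⟨h1, h2⟩))

/-- **Statement 7.**  For a Banach couple `(B₀,B₁)` and `f ∈ 𝔽_𝔸(B₀,B₁)`, the Laurent
coefficient `(1/2π)∫₀^{2π} e^{-n(α+it)} f(e^{α+it}) dt ∈ B₀+B₁` is the same for every
`α ∈ [0,1]`, and this common value belongs to `B₀ ∩ B₁`. -/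
theorem stmt7 {B₀ B₁ S : Type*}
    [NormedAddCommGroup B₀] [NormedSpace ℂ B₀] [CompleteSpace B₀]
    [NormedAddCommGroup B₁] [NormedSpace ℂ B₁] [CompleteSpace B₁]
    [NormedAddCommGroup S] [NormedSpace ℂ S] [CompleteSpace S]
    (j₀ : B₀ →L[ℂ] S) (j₁ : B₁ →L[ℂ] S) (hc : IsBanachCouple j₀ j₁)
    (f : ℂ → S) (hf : MemFA j₀ j₁ f) (n : ℤ) :
    ∃ c : S, (∀ α ∈ Set.Icc (0 : ℝ) 1, fhat f n α = c) ∧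
      (∃ b₀ : B₀, j₀ b₀ = c) ∧ (∃ b₁ : B₁, j₁ b₁ = c) := by
  obtain ⟨hcont, hdiff, ⟨g₀, hg₀c, hg₀⟩, ⟨g₁, hg₁c, hg₁⟩⟩ := hf

  have hconst : ∀ α ∈ Set.Icc (0:ℝ) 1, fhat f n α = fhat f n 0 := by
    intro α hα
    rw [fhat_eq, fhat_eq, circle_const f hcont hdiff n hα, Real.exp_zero]
  set h₀ : ℝ → B₀ := fun t => Complex.exp (-(n:ℂ) * ((t:ℂ) * Complex.I)) • g₀ t with hh₀
  have h₀c : Continuous h₀ :=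
    (Complex.continuous_exp.comp (continuous_const.mul
      (Complex.continuous_ofReal.mul continuous_const))).smul hg₀c
  set h₁ : ℝ → B₁ := fun t => Complex.exp (-(n:ℂ) * (1 + (t:ℂ) * Complex.I)) • g₁ t with hh₁
  have h₁c : Continuous h₁ :=
    (Complex.continuous_exp.comp (continuous_const.mul (continuous_const.add
      (Complex.continuous_ofReal.mul continuous_const)))).smul hg₁c
  have key₀ : fhat f n 0 =
      j₀ ((1 / (2 * Real.pi) : ℂ) • ∫ t in (0:ℝ)..(2 * Real.pi), h₀ t) := by
    unfold fhat
    rw [j₀.map_smul, ← j₀.intervalIntegral_comp_comm (h₀c.intervalIntegrable _ _)]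
    congr 1
    apply intervalIntegral.integral_congr
    intro t _
    simp only [Complex.ofReal_zero, zero_add, hg₀ t, hh₀, ContinuousLinearMap.map_smul]
  have key₁ : fhat f n 1 =
      j₁ ((1 / (2 * Real.pi) : ℂ) • ∫ t in (0:ℝ)..(2 * Real.pi), h₁ t) := by
    unfold fhat
    rw [j₁.map_smul, ← j₁.intervalIntegral_comp_comm (h₁c.intervalIntegrable _ _)]
    congr 1
    apply intervalIntegral.integral_congr
    intro t _
    simp only [Complex.ofReal_one, hg₁ t, hh₁, ContinuousLinearMap.map_smul]
  refine ⟨fhat f n 0, hconst, ⟨_, key₀.symm⟩,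
    ⟨_, key₁.symm.trans (hconst 1 (by norm_num))⟩⟩
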